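/- Let i ≥ 1 be a natural number and let Λ be any type. There is no view-distance-i verifier A over the label type Λ satisfying both: (error-tolerant completeness) for every n and every connected bipartite simple graph G on Fin n (i.e., G admits a proper 2-coloring), there exists an oracular labeling L_O : Fin n → Λ such that every labeling L : Fin n → Λ that differs from L_O at no more than i vertices satisfies A(G, L, v) = true for every vertex v; and (soundness) for every n and every connected simple graph G on Fin n that is not bipartite, for every labeling L : Fin n → Λ there exists a vertex v with A(G, L, v) = false. -/

import Mathlib

open SimpleGraph

/-- cycle graph on `Fin n` via `ZMod n` arithmetic -/
def cyc (n : ℕ) : SimpleGraph (Fin n) where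
  Adj u v := u ≠ v ∧ (((u.val : ZMod n)) = (v.val : ZMod n) + 1 ∨ ((v.val : ZMod n)) = (u.val : ZMod n) + 1)
  symm := by
    refine ⟨?_⟩
    rintro u v ⟨h1, h2⟩
    exact ⟨h1.symm, h2.symm⟩
  loopless := ⟨fun u h => h.1 rfl⟩

/-- `ZMod n → Fin n` -/
def fz {n : ℕ} [NeZero n] (x : ZMod n) : Fin n := ⟨x.val, ZMod.val_lt x⟩

lemma fz_cast {n : ℕ} [NeZero n] (x : ZMod n) : ((fz x).val : ZMod n) = x :=
  ZMod.natCast_rightInverse x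

lemma fz_inj {n : ℕ} [NeZero n] : Function.Injective (fz (n := n)) := by
  intro x y h
  have := congrArg (fun w : Fin n => ((w.val : ℕ) : ZMod n)) h
  simpa [fz_cast] using this

lemma fz_cast_self {n : ℕ} [NeZero n] (u : Fin n) : fz ((u.val : ZMod n)) = u := by
  apply Fin.ext
  simp [fz, ZMod.val_cast_of_lt u.isLt]

lemma cyc_adj {n : ℕ} {u v : Fin n} :
    (cyc n).Adj u v ↔ u ≠ v ∧ (((u.val : ZMod n)) = (v.val : ZMod n) + 1 ∨ ((v.val : ZMod n)) = (u.val : ZMod n) + 1) := Iff.rfl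

lemma one_ne_zero_zmod {n : ℕ} (hn : 2 ≤ n) : (1 : ZMod n) ≠ 0 := by
  intro h
  have : ((1 : ℕ) : ZMod n) = 0 := by exact_mod_cast h
  rw [ZMod.natCast_eq_zero_iff] at this
  have := Nat.le_of_dvd one_pos this
  omega

lemma cyc_adj_succ {n : ℕ} [NeZero n] (hn : 2 ≤ n) (x : ZMod n) :
    (cyc n).Adj (fz x) (fz (x + 1)) := by
  refine ⟨?_, Or.inr ?_⟩
  · intro h
    have := fz_inj h
    have h1 : (1 : ZMod n) = 0 := by
      have := congrArg (fun y => y - x) this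
      simpa using this.symm
    exact one_ne_zero_zmod hn h1
  · rw [fz_cast, fz_cast]

lemma walk_sum {n : ℕ} [NeZero n] {u v : Fin n} (W : (cyc n).Walk u v) :
    ∃ s : ℤ, s.natAbs ≤ W.length ∧ ((v.val : ZMod n)) = (u.val : ZMod n) + (s : ZMod n) := by
  induction W with
  | nil => exact ⟨0, by simp⟩
  | @cons a b c h W ih =>
    obtain ⟨s, hs, he⟩ := ih
    rcases h.2 with h1 | h1
    · refine ⟨s - 1, ?_, ?_⟩
      · have := Int.natAbs_add_le s (-1)
        simp only [Walk.length_cons, sub_eq_add_neg]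
        simp at this
        omega
      · have hb : (b.val : ZMod n) = (a.val : ZMod n) - 1 := by rw [h1]; ring
        rw [he, hb]
        push_cast
        ring
    · refine ⟨s + 1, ?_, ?_⟩
      · have := Int.natAbs_add_le s 1
        simp only [Walk.length_cons]
        simp at this
        omega
      · rw [he, h1]
        push_cast
        ring

lemma walk_to_add {n : ℕ} [NeZero n] (hn : 2 ≤ n) (x y : ZMod n) (k : ℕ)
    (hy : y = x + k) : ∃ W : (cyc n).Walk (fz x) (fz y), W.length ≤ k := by
  induction k generalizing y with
  | zero =>
    have : y = x := by simpa using hy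
    subst this
    exact ⟨Walk.nil, by simp⟩
  | succ k ih =>
    obtain ⟨W, hW⟩ := ih (x + k) rfl
    have hadj : (cyc n).Adj (fz (x + k)) (fz y) := by
      have hy2 : y = (x + k) + 1 := by rw [hy]; push_cast; ring
      rw [hy2]
      exact cyc_adj_succ hn (x + k)
    refine ⟨W.concat hadj, ?_⟩
    rw [Walk.length_concat]
    omega

lemma walk_to_int {n : ℕ} [NeZero n] (hn : 2 ≤ n) (x y : ZMod n) (s : ℤ)
    (hy : y = x + s) : ∃ W : (cyc n).Walk (fz x) (fz y), W.length ≤ s.natAbs := by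
  rcases Int.natAbs_eq s with h | h
  · refine walk_to_add hn x y s.natAbs ?_
    have h2 : ((s.natAbs : ℕ) : ZMod n) = (s : ZMod n) := by
      rw [← Int.cast_natCast (R := ZMod n), ← h]
    rw [hy, h2]
  · obtain ⟨W, hW⟩ := walk_to_add hn y x s.natAbs (by
      have h2 : ((s.natAbs : ℕ) : ZMod n) = -(s : ZMod n) := by
        rw [← Int.cast_natCast (R := ZMod n), show ((s.natAbs : ℤ)) = -s from by omega]
        push_cast; ring
      rw [hy, h2]; ring)
    exact ⟨W.reverse, by simpa using hW⟩

lemma cyc_dist_le {n : ℕ} [NeZero n] (hn : 2 ≤ n) (x y : ZMod n) (s : ℤ)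
    (hy : y = x + s) : (cyc n).dist (fz x) (fz y) ≤ s.natAbs := by
  obtain ⟨W, hW⟩ := walk_to_int hn x y s hy
  exact le_trans (SimpleGraph.dist_le W) hW

lemma cyc_connected {n : ℕ} [NeZero n] (hn : 2 ≤ n) : (cyc n).Connected := by
  rw [connected_iff]
  refine ⟨?_, ?_⟩
  · intro u v
    obtain ⟨W, -⟩ := walk_to_int hn (u.val : ZMod n) (v.val : ZMod n)
      ((((v.val : ZMod n) - (u.val : ZMod n)).val : ℤ)) (by
        push_cast
        rw [ZMod.natCast_rightInverse]
        ring)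
    rw [fz_cast_self, fz_cast_self] at W
    exact W.reachable
  · exact ⟨⟨0, by have := NeZero.pos n; omega⟩⟩

lemma cyc_dist_char {n : ℕ} [NeZero n] (hn : 2 ≤ n) {v u : Fin n} {i : ℕ}
    (h : (cyc n).dist v u ≤ i) :
    ∃ s : ℤ, s.natAbs ≤ i ∧ (u.val : ZMod n) = (v.val : ZMod n) + s := by
  have hr : (cyc n).Reachable v u := (cyc_connected hn).preconnected v u
  obtain ⟨W, hW⟩ := hr.exists_walk_length_eq_dist
  obtain ⟨s, hs, he⟩ := walk_sum W
  exact ⟨s, by omega, he⟩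

lemma cyc_colorable {n : ℕ} (hn : 2 ∣ n) : (cyc n).Colorable 2 := by
  have : Fintype.card (ZMod 2) = 2 := ZMod.card 2
  rw [← this]
  refine SimpleGraph.Coloring.colorable (SimpleGraph.Coloring.mk
    (fun u => ZMod.castHom hn (ZMod 2) (u.val : ZMod n)) ?_)
  intro u v hadj he
  change ZMod.castHom hn (ZMod 2) (u.val : ZMod n) = ZMod.castHom hn (ZMod 2) (v.val : ZMod n) at he
  rcases hadj.2 with h1 | h1
  · have := congrArg (ZMod.castHom hn (ZMod 2)) h1
    rw [map_add, map_one, ← he] at this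
    exact one_ne_zero (left_eq_add.mp this)
  · have := congrArg (ZMod.castHom hn (ZMod 2)) h1
    rw [map_add, map_one, he] at this
    exact one_ne_zero (left_eq_add.mp this)

lemma fin2_trick : ∀ a b c : Fin 2, a ≠ b → (a = c ↔ ¬ b = c) := by decide

lemma cyc_not_colorable {n : ℕ} [NeZero n] (hn : 3 ≤ n) (hodd : ¬ 2 ∣ n) :
    ¬ (cyc n).Colorable 2 := by
  intro h
  obtain ⟨C⟩ := h
  have step : ∀ x : ZMod n, C (fz (x + 1)) ≠ C (fz x) :=
    fun x => C.valid (cyc_adj_succ (by omega) x).symm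
  have key : ∀ k : ℕ, (C (fz ((k : ZMod n))) = C (fz 0) ↔ 2 ∣ k) := by
    intro k
    induction k with
    | zero => simp
    | succ k ih =>
      have h1 : C (fz ((k : ZMod n) + 1)) ≠ C (fz (k : ZMod n)) := step _
      have h2 := fin2_trick _ _ (C (fz 0)) h1
      push_cast
      rw [h2]
      rw [ih]
      omega
  have := (key n).mp (by rw [ZMod.natCast_self])
  exact hodd this

lemma zmod_int_eq_zero_small {n : ℕ} (a : ℤ) (ha : a.natAbs < n)
    (h : (a : ZMod n) = 0) : a = 0 := by
  rw [ZMod.intCast_zmod_eq_zero_iff_dvd] at h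
  by_contra hne
  have h1 : (n : ℤ) ∣ |a| := (dvd_abs _ _).mpr h
  have h2 : (n : ℤ) ≤ (a.natAbs : ℤ) := by
    rw [← Int.abs_eq_natAbs]
    exact Int.le_of_dvd (abs_pos.mpr hne) h1
  omega

def ball (n i : ℕ) (v : Fin n) : Set (Fin n) := {u | (cyc n).dist v u ≤ i}

def vtx (n i : ℕ) [NeZero n] (v : Fin n) (t : Fin (2*i+1)) : Fin n :=
  fz ((v.val : ZMod n) + (Int.cast ((t.val : ℤ) - (i : ℤ)) : ZMod n))

lemma vtx_cast {n i : ℕ} [NeZero n] (v : Fin n) (t : Fin (2*i+1)) :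
    ((vtx n i v t).val : ZMod n) = (v.val : ZMod n) + (Int.cast ((t.val : ℤ) - (i : ℤ)) : ZMod n) :=
  fz_cast _

lemma vtx_mem {n i : ℕ} [NeZero n] (hn : 2 ≤ n) (v : Fin n) (t : Fin (2*i+1)) :
    vtx n i v t ∈ ball n i v := by
  have h := cyc_dist_le hn (v.val : ZMod n) _ ((t.val : ℤ) - (i : ℤ)) rfl
  rw [fz_cast_self] at h
  have ht := t.isLt
  show (cyc n).dist v (vtx n i v t) ≤ i
  have h2 : (cyc n).dist v (vtx n i v t) ≤ ((t.val : ℤ) - (i : ℤ)).natAbs := h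
  omega

lemma vtx_inj {n i : ℕ} [NeZero n] (hn : 2*i+2 ≤ n) (v : Fin n) {t t' : Fin (2*i+1)}
    (h : vtx n i v t = vtx n i v t') : t = t' := by
  have hc := congrArg (fun w : Fin n => ((w.val : ℕ) : ZMod n)) h
  simp only [vtx_cast] at hc
  have h2 : (Int.cast ((t.val : ℤ) - (t'.val : ℤ)) : ZMod n) = 0 := by
    push_cast
    push_cast at hc
    linear_combination hc
  have ht := t.isLt; have ht' := t'.isLt
  have h3 := zmod_int_eq_zero_small ((t.val : ℤ) - (t'.val : ℤ)) (by omega) h2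
  exact Fin.ext (by omega)

lemma vtx_surj {n i : ℕ} [NeZero n] (hn : 2*i+2 ≤ n) (v : Fin n) {u : Fin n}
    (hu : u ∈ ball n i v) : ∃ t : Fin (2*i+1), vtx n i v t = u := by
  obtain ⟨s, hs, he⟩ := cyc_dist_char (by omega) hu
  have htlt : (s + (i:ℤ)).toNat < 2*i+1 := by omega
  refine ⟨⟨(s + (i:ℤ)).toNat, htlt⟩, ?_⟩
  have h1 : ((((⟨(s + (i:ℤ)).toNat, htlt⟩ : Fin (2*i+1)).val : ℤ) - (i : ℤ))) = s := by
    show (((s + (i:ℤ)).toNat : ℤ) - (i : ℤ)) = s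
    omega
  have h2 : (v.val : ZMod n) + (Int.cast ((((⟨(s + (i:ℤ)).toNat, htlt⟩ : Fin (2*i+1)).val : ℤ) - (i:ℤ))) : ZMod n)
      = (u.val : ZMod n) := by
    rw [h1, he]
  calc vtx n i v ⟨(s + (i:ℤ)).toNat, htlt⟩ = fz ((u.val : ZMod n)) := congrArg fz h2
    _ = u := fz_cast_self u

noncomputable def ballEquiv {n : ℕ} (i : ℕ) [NeZero n] (hn : 2*i+2 ≤ n) (v : Fin n) :
    Fin (2*i+1) ≃ (ball n i v) :=
  Equiv.ofBijective (fun t => ⟨vtx n i v t, vtx_mem (by omega) v t⟩)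
    ⟨fun t t' h => vtx_inj hn v (Subtype.ext_iff.mp h),
     fun u => by obtain ⟨t, ht⟩ := vtx_surj hn v u.2; exact ⟨t, Subtype.ext ht⟩⟩

lemma ballEquiv_apply {n i : ℕ} [NeZero n] (hn : 2*i+2 ≤ n) (v : Fin n) (t : Fin (2*i+1)) :
    ((ballEquiv i hn v t : (ball n i v)) : Fin n) = vtx n i v t := rfl

lemma ballEquiv_symm {n i : ℕ} [NeZero n] (hn : 2*i+2 ≤ n) (v : Fin n) (t : Fin (2*i+1))
    (h : vtx n i v t ∈ ball n i v) :
    (ballEquiv i hn v).symm ⟨vtx n i v t, h⟩ = t := by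
  rw [Equiv.symm_apply_eq]
  rfl

lemma vtx_adj {n i : ℕ} [NeZero n] (hn : 2*i+2 ≤ n) (v : Fin n) (t t' : Fin (2*i+1)) :
    (cyc n).Adj (vtx n i v t) (vtx n i v t') ↔ ((t.val : ℤ) - (t'.val : ℤ)).natAbs = 1 := by
  have ht := t.isLt; have ht' := t'.isLt
  constructor
  · rintro ⟨hne, h | h⟩
    · rw [vtx_cast, vtx_cast] at h
      have h2 : (Int.cast (((t.val : ℤ) - t'.val - 1)) : ZMod n) = 0 := by
        push_cast
        push_cast at h
        linear_combination h
      have := zmod_int_eq_zero_small ((t.val : ℤ) - t'.val - 1) (by omega) h2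
      omega
    · rw [vtx_cast, vtx_cast] at h
      have h2 : (Int.cast (((t'.val : ℤ) - t.val - 1)) : ZMod n) = 0 := by
        push_cast
        push_cast at h
        linear_combination h
      have := zmod_int_eq_zero_small ((t'.val : ℤ) - t.val - 1) (by omega) h2
      omega
  · intro h
    have hne : t ≠ t' := by
      intro he; rw [he] at h; simp at h
    refine ⟨fun he => hne (vtx_inj hn v he), ?_⟩
    rcases Nat.lt_or_ge t'.val t.val with hlt | hge
    · left
      rw [vtx_cast, vtx_cast]
      have : (t.val : ℤ) = t'.val + 1 := by omega
      rw [this]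
      push_cast
      ring
    · right
      rw [vtx_cast, vtx_cast]
      have : (t'.val : ℤ) = t.val + 1 := by omega
      rw [this]
      push_cast
      ring

noncomputable def ballIso {n n' : ℕ} (i : ℕ) [NeZero n] [NeZero n']
    (hn : 2*i+2 ≤ n) (hn' : 2*i+2 ≤ n') (v : Fin n) (v' : Fin n') :
    ((cyc n).induce (ball n i v)) ≃g ((cyc n').induce (ball n' i v')) where
  toEquiv := ((ballEquiv i hn v).symm.trans (ballEquiv i hn' v'))
  map_rel_iff' := by
    intro a b
    obtain ⟨ta, rfl⟩ := (ballEquiv i hn v).surjective a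
    obtain ⟨tb, rfl⟩ := (ballEquiv i hn v).surjective b
    simp only [Equiv.trans_apply, Equiv.symm_apply_apply]
    show (cyc n').Adj (vtx n' i v' ta) (vtx n' i v' tb) ↔ (cyc n).Adj (vtx n i v ta) (vtx n i v tb)
    rw [vtx_adj hn' v', vtx_adj hn v]

lemma vtx_center {n i : ℕ} [NeZero n] (v : Fin n) :
    vtx n i v ⟨i, by omega⟩ = v := by
  unfold vtx
  norm_num
  exact fz_cast_self v

lemma vtx_val_eq {n i : ℕ} [NeZero n] (v : Fin n) (t : Fin (2*i+1)) (a : ℕ)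
    (ha : (a : ℤ) = (v.val : ℤ) + t.val - i ∨ (a : ℤ) = (v.val : ℤ) + t.val - i + n)
    (ha2 : a < n) : (vtx n i v t).val = a := by
  have key : (v.val : ZMod n) + (Int.cast ((t.val : ℤ) - (i : ℤ)) : ZMod n)
      = ((a : ℕ) : ZMod n) := by
    have e1 : (v.val : ZMod n) + (Int.cast ((t.val : ℤ) - (i : ℤ)) : ZMod n)
        = (Int.cast ((v.val : ℤ) + ((t.val : ℤ) - (i : ℤ))) : ZMod n) := by
      push_cast; ring
    have e2 : ((a : ℕ) : ZMod n) = (Int.cast ((a : ℕ) : ℤ) : ZMod n) := by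
      push_cast; ring
    rw [e1, e2]
    rcases ha with h | h
    · rw [h]; congr 1; ring
    · rw [h]
      push_cast
      rw [ZMod.natCast_self]
      ring
  show (fz _).val = a
  unfold fz
  simp only
  rw [key, ZMod.val_cast_of_lt ha2]

lemma ncard_fin_lt (k j : ℕ) (h : k ≤ j) : ({t : Fin j | t.val < k} : Set (Fin j)).ncard ≤ k := by
  have hsub : ({t : Fin j | t.val < k} : Set (Fin j))
      ⊆ Set.range (fun s : Fin k => (⟨s.val, lt_of_lt_of_le s.isLt h⟩ : Fin j)) := by
    rintro t ht
    exact ⟨⟨t.val, ht⟩, rfl⟩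
  calc ({t : Fin j | t.val < k} : Set (Fin j)).ncard
      ≤ (Set.range (fun s : Fin k => (⟨s.val, lt_of_lt_of_le s.isLt h⟩ : Fin j))).ncard :=
        Set.ncard_le_ncard hsub (Set.toFinite _)
    _ = ((fun s : Fin k => (⟨s.val, lt_of_lt_of_le s.isLt h⟩ : Fin j)) '' Set.univ).ncard := by
        rw [Set.image_univ]
    _ ≤ (Set.univ : Set (Fin k)).ncard := Set.ncard_image_le Set.finite_univ
    _ = k := by rw [Set.ncard_univ, Nat.card_eq_fintype_card, Fintype.card_fin]

lemma ncard_fin_gt (k j : ℕ) (h : j ≤ 2*k+1) : ({t : Fin j | k < t.val} : Set (Fin j)).ncard ≤ k := by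
  calc ({t : Fin j | k < t.val} : Set (Fin j)).ncard
      ≤ (Set.range (fun s : Fin k => s.val)).ncard := by
        refine Set.ncard_le_ncard_of_injOn (fun t => t.val - (k+1)) ?_ ?_ (Set.toFinite _)
        · intro t ht
          simp only [Set.mem_setOf_eq] at ht
          have := t.isLt
          exact ⟨⟨t.val - (k+1), by omega⟩, rfl⟩
        · intro t1 h1 t2 h2 he
          simp only [Set.mem_setOf_eq] at h1 h2
          simp only at he
          exact Fin.ext (by omega)
    _ = ((fun s : Fin k => s.val) '' Set.univ).ncard := by rw [Set.image_univ]
    _ ≤ (Set.univ : Set (Fin k)).ncard := Set.ncard_image_le Set.finite_univ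
    _ = k := by rw [Set.ncard_univ, Nat.card_eq_fintype_card, Fintype.card_fin]

lemma agreeA {i : ℕ} [NeZero (2*i+2)] [NeZero (2*i+3)] (v' : Fin (2*i+3)) (v : Fin (2*i+2))
    (hvv : v.val = v'.val) (hcase : v'.val + i < 2*i+2) (t : Fin (2*i+1)) (ht : i ≤ t.val) :
    (vtx (2*i+3) i v' t).val % (2*i+2) = (vtx (2*i+2) i v t).val := by
  have htv := t.isLt
  have e1 := vtx_val_eq v' t (v'.val + (t.val - i)) (Or.inl (by omega)) (by omega)
  have e2 := vtx_val_eq v t (v'.val + (t.val - i)) (Or.inl (by omega)) (by omega)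
  rw [e1, e2, Nat.mod_eq_of_lt (by omega)]

lemma agreeB {i : ℕ} [NeZero (2*i+2)] [NeZero (2*i+3)] (v' : Fin (2*i+3)) (v : Fin (2*i+2))
    (hvv : v.val = v'.val % (2*i+2)) (hcase : 2*i+2 ≤ v'.val + i) (t : Fin (2*i+1))
    (ht : t.val ≤ i) :
    (vtx (2*i+3) i v' t).val % (2*i+2) = (vtx (2*i+2) i v t).val := by
  have htv := t.isLt
  have hv'lt := v'.isLt
  rcases Nat.lt_or_ge v'.val (2*i+2) with hlt | hge
  · have hv0 : v.val = v'.val := by rw [hvv, Nat.mod_eq_of_lt hlt]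
    have e1 := vtx_val_eq v' t (v'.val - (i - t.val)) (Or.inl (by omega)) (by omega)
    have e2 := vtx_val_eq v t (v'.val - (i - t.val)) (Or.inl (by omega)) (by omega)
    rw [e1, e2, Nat.mod_eq_of_lt (by omega)]
  · have hv'eq : v'.val = 2*i+2 := by omega
    have hv0 : v.val = 0 := by rw [hvv, hv'eq, Nat.mod_self]
    have e1 := vtx_val_eq v' t (v'.val - (i - t.val)) (Or.inl (by omega)) (by omega)
    rcases Nat.lt_or_ge t.val i with htlt | htge
    · have e2 := vtx_val_eq v t ((2*i+2) - (i - t.val)) (Or.inr (by omega)) (by omega)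
      rw [e1, e2, hv'eq, Nat.mod_eq_of_lt (by omega)]
    · have hti : t.val = i := by omega
      have e2 := vtx_val_eq v t 0 (Or.inl (by omega)) (by omega)
      rw [e1, e2, hv'eq, hti]
      simp



/-- `A` is a view-distance-`d` verifier over the label type `Λ`: its verdict at a
vertex is invariant under labeled pointed isomorphisms of radius-`d` balls. -/
def IsLocalVerifier (Λ : Type*) (d : ℕ)
    (A : ∀ n : ℕ, SimpleGraph (Fin n) → (Fin n → Λ) → Fin n → Bool) : Prop :=
  ∀ (n n' : ℕ) (G : SimpleGraph (Fin n)) (G' : SimpleGraph (Fin n'))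
    (L : Fin n → Λ) (L' : Fin n' → Λ) (v : Fin n) (v' : Fin n')
    (φ : G.induce {u | G.dist v u ≤ d} ≃g G'.induce {u | G'.dist v' u ≤ d})
    (hv : G.dist v v ≤ d),
    (↑(φ ⟨v, hv⟩) = v') →
    (∀ u : {u | G.dist v u ≤ d}, L' ↑(φ u) = L ↑u) →
    A n G L v = A n' G' L' v'

/-- Impossibility of error-resilient verification of bipartiteness: no
view-distance-`i` verifier tolerates `i` adversarial label errors in the whole
graph, with any label type. -/
theorem no_error_tolerant_bipartiteness (i : ℕ) (hi : 1 ≤ i) (Λ : Type) :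
    ¬ ∃ A : ∀ n : ℕ, SimpleGraph (Fin n) → (Fin n → Λ) → Fin n → Bool,
      IsLocalVerifier Λ i A ∧
      (∀ (n : ℕ) (G : SimpleGraph (Fin n)), G.Connected → G.Colorable 2 →
        ∃ L_O : Fin n → Λ, ∀ L : Fin n → Λ,
          {v : Fin n | L v ≠ L_O v}.ncard ≤ i → ∀ v : Fin n, A n G L v = true) ∧
      (∀ (n : ℕ) (G : SimpleGraph (Fin n)), G.Connected → ¬ G.Colorable 2 →
        ∀ L : Fin n → Λ, ∃ v : Fin n, A n G L v = false) := by
  rintro ⟨A, hloc, hC, hS⟩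
  classical
  haveI h1 : NeZero (2*i+2) := ⟨by omega⟩
  haveI h2 : NeZero (2*i+3) := ⟨by omega⟩
  obtain ⟨L_O, hLO⟩ := hC (2*i+2) (cyc _) (cyc_connected (by omega))
    (cyc_colorable ⟨i+1, by ring⟩)
  let g : Fin (2*i+3) → Fin (2*i+2) := fun u => ⟨u.val % (2*i+2), Nat.mod_lt _ (by omega)⟩
  let L' : Fin (2*i+3) → Λ := fun u => L_O (g u)
  obtain ⟨v', hv'⟩ := hS (2*i+3) (cyc _) (cyc_connected (by omega))
    (cyc_not_colorable (by omega) (by omega)) L'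
  have h23 : 2*i+2 ≤ 2*i+3 := by omega
  have h22 : 2*i+2 ≤ 2*i+2 := le_refl _
  -- choose center v in the even cycle and the exceptional offset set T
  obtain ⟨v, T, hT, hagree⟩ : ∃ (v : Fin (2*i+2)) (T : Set (Fin (2*i+1))),
      T.ncard ≤ i ∧ ∀ t ∉ T, L' (vtx (2*i+3) i v' t) = L_O (vtx (2*i+2) i v t) := by
    by_cases hcase : v'.val + i < 2*i+2
    · have hvlt : v'.val < 2*i+2 := by omega
      refine ⟨⟨v'.val, hvlt⟩, {t | t.val < i}, ncard_fin_lt i (2*i+1) (by omega), ?_⟩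
      intro t ht
      simp only [Set.mem_setOf_eq, not_lt] at ht
      show L_O (g (vtx (2*i+3) i v' t)) = L_O (vtx (2*i+2) i ⟨v'.val, hvlt⟩ t)
      congr 1
      apply Fin.ext
      show (vtx (2*i+3) i v' t).val % (2*i+2) = (vtx (2*i+2) i ⟨v'.val, hvlt⟩ t).val
      exact agreeA v' ⟨v'.val, hvlt⟩ rfl hcase t ht
    · have hvlt : v'.val % (2*i+2) < 2*i+2 := Nat.mod_lt _ (by omega)
      refine ⟨⟨v'.val % (2*i+2), hvlt⟩, {t | i < t.val}, ncard_fin_gt i (2*i+1) (by omega), ?_⟩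
      intro t ht
      simp only [Set.mem_setOf_eq, not_lt] at ht
      show L_O (g (vtx (2*i+3) i v' t)) = L_O (vtx (2*i+2) i ⟨v'.val % (2*i+2), hvlt⟩ t)
      congr 1
      apply Fin.ext
      show (vtx (2*i+3) i v' t).val % (2*i+2)
          = (vtx (2*i+2) i ⟨v'.val % (2*i+2), hvlt⟩ t).val
      exact agreeB v' ⟨v'.val % (2*i+2), hvlt⟩ rfl (by omega) t ht
  -- the adversarial labeling on the even cycle
  let L : Fin (2*i+2) → Λ := fun w =>
    if h : w ∈ _root_.ball (2*i+2) i v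
    then L' (vtx (2*i+3) i v' ((ballEquiv i h22 v).symm ⟨w, h⟩))
    else L_O w
  have hLw : ∀ t : Fin (2*i+1), L (vtx (2*i+2) i v t) = L' (vtx (2*i+3) i v' t) := by
    intro t
    have hmem : vtx (2*i+2) i v t ∈ _root_.ball (2*i+2) i v := vtx_mem (by omega) v t
    show dite _ _ _ = _
    rw [dif_pos hmem, ballEquiv_symm]
  have herr : {w : Fin (2*i+2) | L w ≠ L_O w}.ncard ≤ i := by
    have hsub : {w : Fin (2*i+2) | L w ≠ L_O w} ⊆ (fun t => vtx (2*i+2) i v t) '' T := by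
      intro w hw
      simp only [Set.mem_setOf_eq] at hw
      by_cases h : w ∈ _root_.ball (2*i+2) i v
      · obtain ⟨t, rfl⟩ := vtx_surj h22 v h
        by_cases htT : t ∈ T
        · exact ⟨t, htT, rfl⟩
        · exact absurd ((hLw t).trans (hagree t htT)) hw
      · exact absurd (dif_neg h) hw
    calc {w : Fin (2*i+2) | L w ≠ L_O w}.ncard
        ≤ ((fun t => vtx (2*i+2) i v t) '' T).ncard :=
          Set.ncard_le_ncard hsub (Set.toFinite _)
      _ ≤ T.ncard := Set.ncard_image_le (Set.toFinite _)
      _ ≤ i := hT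
  have htrue : A (2*i+2) (cyc _) L v = true := hLO L herr v
  -- the ball isomorphism
  have hdist : (cyc (2*i+3)).dist v' v' ≤ i := by rw [SimpleGraph.dist_self]; omega
  have hcent : (((ballIso i h23 h22 v' v) ⟨v', hdist⟩ : {u | (cyc (2*i+2)).dist v u ≤ i}) : Fin (2*i+2)) = v := by
    have hmemc : vtx (2*i+3) i v' ⟨i, by omega⟩ ∈ _root_.ball (2*i+3) i v' :=
      vtx_mem (by omega) v' _
    rw [show (⟨v', hdist⟩ : _root_.ball (2*i+3) i v')
        = ⟨vtx (2*i+3) i v' ⟨i, by omega⟩, hmemc⟩ from Subtype.ext (vtx_center v').symm]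
    show ((ballEquiv i h22 v) ((ballEquiv i h23 v').symm
      ⟨vtx (2*i+3) i v' ⟨i, by omega⟩, hmemc⟩) : Fin (2*i+2)) = v
    rw [ballEquiv_symm]
    exact vtx_center v
  have hlab : ∀ u : {u | (cyc (2*i+3)).dist v' u ≤ i},
      L ↑((ballIso i h23 h22 v' v) u) = L' ↑u := by
    intro u
    obtain ⟨t, rfl⟩ := (ballEquiv i h23 v').surjective u
    have hstep : (ballIso i h23 h22 v' v) ((ballEquiv i h23 v') t) = (ballEquiv i h22 v) t := by
      show (ballEquiv i h22 v) ((ballEquiv i h23 v').symm ((ballEquiv i h23 v') t))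
          = (ballEquiv i h22 v) t
      rw [Equiv.symm_apply_apply]
    rw [hstep]
    show L (vtx (2*i+2) i v t) = L' (vtx (2*i+3) i v' t)
    exact hLw t
  have hfinal := hloc (2*i+3) (2*i+2) (cyc _) (cyc _) L' L v' v
    (ballIso i h23 h22 v' v) hdist hcent hlab
  rw [hfinal, htrue] at hv'
  exact absurd hv' (by simp)
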